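/- Let Γ = N ⋊ Q and let k be an algebraically closed field, f a subfield of k. Let ρ : Γ → GL_m(k) be a homomorphism whose restriction ρ|_N is irreducible and such that (after conjugation) P∘ρ|_N takes values in the image G_f of GL_m(f) in PGL_m(k). If there exists a generating set S of N such that ρ(α) has nonzero trace for every α ∈ S, then P∘ρ takes values in G_f (up to the same conjugation); i.e. f is a field of definition for the projective representation Pρ. -/

import Mathlib

open SemidirectProduct

private lemma aux_scalar_mem_center {k : Type*} [Field k] {m : ℕ}
    (u : Matrix.GeneralLinearGroup (Fin m) k) (a : k)
    (hu : (u : Matrix (Fin m) (Fin m) k) = a • 1) :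
    u ∈ Subgroup.center (Matrix.GeneralLinearGroup (Fin m) k) := by
  rw [Subgroup.mem_center_iff]
  intro g
  refine Units.ext ?_
  rw [Units.val_mul, Units.val_mul, hu, mul_smul_comm, smul_mul_assoc, mul_one, one_mul]

private lemma aux_center_scalar {k : Type*} [Field k] {m : ℕ}
    {Z : Matrix.GeneralLinearGroup (Fin m) k}
    (hZ : Z ∈ Subgroup.center (Matrix.GeneralLinearGroup (Fin m) k)) :
    ∃ a : k, (Z : Matrix (Fin m) (Fin m) k) = a • 1 := by
  have h : (Z : Matrix (Fin m) (Fin m) k) ∈ Set.range (Matrix.scalar (Fin m)) := by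
    apply Matrix.mem_range_scalar_of_commute_transvectionStruct
    intro t
    have hc := Subgroup.mem_center_iff.mp hZ
      ⟨t.toMatrix, t.inv.toMatrix, t.mul_inv, t.inv_mul⟩
    have := congrArg Units.val hc
    rw [Units.val_mul, Units.val_mul] at this
    exact this
  obtain ⟨a, ha⟩ := h
  refine ⟨a, ?_⟩
  rw [← ha, Matrix.smul_one_eq_diagonal]
  rfl


/-- Let `Γ = N ⋊ Q`, `k` an algebraically closed field, `f` a subfield of
`k`, and `ρ : Γ → GL_m(k)` with `ρ|_N` irreducible and such that the projectivization
`P∘ρ|_N` takes values in the image `G_f` of `GL_m(f)` in `PGL_m(k)` (here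
`PGL_m(k) = GL_m(k)/center` with projection `P`).  If there is a generating set `S` of `N`
with `trace ρ(α) ≠ 0` for all `α ∈ S`, then `P∘ρ` takes values in `G_f`. -/
theorem field_of_definition_of_projective_extension
    {N Q : Type*} [Group N] [Group Q] (φ : Q →* MulAut N)
    (k : Type*) [Field k] [IsAlgClosed k] (m : ℕ) (f : Subfield k)
    (P : Matrix.GeneralLinearGroup (Fin m) k →*
        Matrix.GeneralLinearGroup (Fin m) k ⧸ Subgroup.center (Matrix.GeneralLinearGroup (Fin m) k))
    (hP : P = QuotientGroup.mk' (Subgroup.center (Matrix.GeneralLinearGroup (Fin m) k)))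
    (Gf : Set (Matrix.GeneralLinearGroup (Fin m) k ⧸
        Subgroup.center (Matrix.GeneralLinearGroup (Fin m) k)))
    (hGf : Gf = {x | ∃ M : Matrix.GeneralLinearGroup (Fin m) k,
      (∀ i j : Fin m, (M : Matrix (Fin m) (Fin m) k) i j ∈ f) ∧ P M = x})
    (ρ : N ⋊[φ] Q →* Matrix.GeneralLinearGroup (Fin m) k)
    -- irreducibility of `ρ|_N`:
    (hirr : ∀ U : Submodule k (Fin m → k),
      (∀ (α : N), ∀ x ∈ U, Matrix.mulVec ((ρ (inl α) : Matrix (Fin m) (Fin m) k)) x ∈ U) →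
      U = ⊥ ∨ U = ⊤)
    -- `P∘ρ|_N` takes values in `G_f`:
    (hval : ∀ α : N, P (ρ (inl α)) ∈ Gf)
    (S : Set N) (hSgen : Subgroup.closure S = ⊤)
    (htr : ∀ α ∈ S, Matrix.trace ((ρ (inl α) : Matrix (Fin m) (Fin m) k)) ≠ 0) :
    ∀ x : N ⋊[φ] Q, P (ρ x) ∈ Gf := by
  classical
  subst hGf
  subst hP
  set P := QuotientGroup.mk' (Subgroup.center (Matrix.GeneralLinearGroup (Fin m) k)) with hP
  -- trivial case m = 0
  rcases Nat.eq_zero_or_pos m with hm | hm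
  · intro x
    subst hm
    exact ⟨ρ x, fun i _ => i.elim0, rfl⟩
  haveI hne : Nonempty (Fin m) := ⟨⟨0, hm⟩⟩
  -- units have nonzero matrices
  have hunit_ne : ∀ u : Matrix.GeneralLinearGroup (Fin m) k,
      (u : Matrix (Fin m) (Fin m) k) ≠ 0 := by
    intro u h0
    have hu := u.isUnit
    rw [h0, Matrix.isUnit_iff_isUnit_det, Matrix.det_zero] at hu
    exact not_isUnit_zero hu
  -- Step A: choose scalar representatives over f
  have hMc : ∀ α : N, ∃ (Mα : Matrix.GeneralLinearGroup (Fin m) k) (cα : k),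
      (∀ i j, (Mα : Matrix (Fin m) (Fin m) k) i j ∈ f) ∧ cα ≠ 0 ∧
      ((ρ (inl α) : Matrix (Fin m) (Fin m) k) = cα • (Mα : Matrix (Fin m) (Fin m) k)) := by
    intro α
    obtain ⟨Mα, hMα, hPM⟩ := hval α
    rw [hP, QuotientGroup.mk'_eq_mk'] at hPM
    obtain ⟨z, hz, hzeq⟩ := hPM
    obtain ⟨a, ha⟩ := aux_center_scalar hz
    have heq : (ρ (inl α) : Matrix (Fin m) (Fin m) k)
        = a • (Mα : Matrix (Fin m) (Fin m) k) := by
      rw [← hzeq, Units.val_mul, ha, mul_smul_comm, mul_one]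
    refine ⟨Mα, a, hMα, ?_, heq⟩
    intro h0
    apply hunit_ne (ρ (inl α))
    rw [heq, h0, zero_smul]
  choose M c hMf hc0 hc using hMc
  -- the main statement for the Q-part
  have key : ∀ q : Q, P (ρ (inr q)) ∈
      {x | ∃ Mx : Matrix.GeneralLinearGroup (Fin m) k,
        (∀ i j : Fin m, (Mx : Matrix (Fin m) (Fin m) k) i j ∈ f) ∧ P Mx = x} := by
    intro q
    set B := ρ (inr q) with hBdef
    set σ : N → N := fun n => φ q n with hσdef
    have hBM : ∀ α : N, (B : Matrix (Fin m) (Fin m) k) * (ρ (inl α) : Matrix (Fin m) (Fin m) k)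
        = (ρ (inl (σ α)) : Matrix (Fin m) (Fin m) k) * (B : Matrix (Fin m) (Fin m) k) := by
      intro α
      have h1 : (inl (σ α) : N ⋊[φ] Q) * inr q = inr q * inl α := by
        rw [hσdef]
        rw [inl_aut, mul_assoc, ← map_mul, inv_mul_cancel, map_one, mul_one]
    -- traces of the representatives over S are nonzero
      have h2 : ρ (inl (σ α)) * B = B * ρ (inl α) := by
        rw [hBdef, ← map_mul, ← map_mul, h1]
      have := congrArg Units.val h2
      rw [Units.val_mul, Units.val_mul] at this
      exact this.symm
    -- scalar relation with scalar in f
    have hnu : ∀ α ∈ S, ∃ ν : k, ν ∈ f ∧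
        (B : Matrix (Fin m) (Fin m) k) * (M α : Matrix (Fin m) (Fin m) k)
          = ν • ((M (σ α) : Matrix (Fin m) (Fin m) k) * (B : Matrix (Fin m) (Fin m) k)) := by
      intro α hα
      set ν : k := (c α)⁻¹ * c (σ α) with hνdef
      have h1 : (B : Matrix (Fin m) (Fin m) k) * (c α • (M α : Matrix (Fin m) (Fin m) k))
          = (c (σ α) • (M (σ α) : Matrix (Fin m) (Fin m) k)) * B := by
        rw [← hc, ← hc]; exact hBM α
      have h2 : (B : Matrix (Fin m) (Fin m) k) * (M α : Matrix (Fin m) (Fin m) k)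
          = ν • ((M (σ α) : Matrix (Fin m) (Fin m) k) * (B : Matrix (Fin m) (Fin m) k)) := by
        rw [mul_smul_comm, smul_mul_assoc] at h1
        calc (B : Matrix (Fin m) (Fin m) k) * (M α : Matrix (Fin m) (Fin m) k)
            = (c α)⁻¹ • (c α • ((B : Matrix (Fin m) (Fin m) k) * (M α : Matrix (Fin m) (Fin m) k))) := by
              rw [smul_smul, inv_mul_cancel₀ (hc0 α), one_smul]
          _ = (c α)⁻¹ • (c (σ α) • ((M (σ α) : Matrix (Fin m) (Fin m) k) * B)) := by rw [h1]
          _ = ν • ((M (σ α) : Matrix (Fin m) (Fin m) k) * (B : Matrix (Fin m) (Fin m) k)) := by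
              rw [smul_smul, hνdef]
      -- trace computation
      have htrα : Matrix.trace (M α : Matrix (Fin m) (Fin m) k) ≠ 0 := by
        intro h0
        apply htr α hα
        rw [hc α, Matrix.trace_smul, h0, smul_zero]
      have htrrel : Matrix.trace (M α : Matrix (Fin m) (Fin m) k)
          = ν * Matrix.trace (M (σ α) : Matrix (Fin m) (Fin m) k) := by
        have h3 : (B : Matrix (Fin m) (Fin m) k) * (M α : Matrix (Fin m) (Fin m) k)
            * ((B⁻¹ : Matrix.GeneralLinearGroup (Fin m) k) : Matrix (Fin m) (Fin m) k)
            = ν • (M (σ α) : Matrix (Fin m) (Fin m) k) := by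
          rw [h2, smul_mul_assoc, mul_assoc, ← Units.val_mul, mul_inv_cancel, Units.val_one,
            mul_one]
        have h4 := congrArg Matrix.trace h3
        rw [Matrix.trace_mul_comm, ← mul_assoc, ← Units.val_mul, inv_mul_cancel,
          Units.val_one, one_mul, Matrix.trace_smul, smul_eq_mul] at h4
        exact h4
      have htrσ : Matrix.trace (M (σ α) : Matrix (Fin m) (Fin m) k) ≠ 0 := by
        intro h0
        rw [h0, mul_zero] at htrrel
        exact htrα htrrel
      have hνf : ν ∈ f := by
        have hν : ν = Matrix.trace (M α : Matrix (Fin m) (Fin m) k)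
            * (Matrix.trace (M (σ α) : Matrix (Fin m) (Fin m) k))⁻¹ := by
          field_simp [htrrel]
          exact htrrel.symm
        have htm : Matrix.trace (M α : Matrix (Fin m) (Fin m) k) ∈ f :=
          Subfield.sum_mem f (fun i _ => hMf α i i)
        have htm' : Matrix.trace (M (σ α) : Matrix (Fin m) (Fin m) k) ∈ f :=
          Subfield.sum_mem f (fun i _ => hMf (σ α) i i)
        rw [hν]
        exact f.mul_mem htm (f.inv_mem htm')
      exact ⟨ν, hνf, h2⟩
    choose ν hνf hνeq using hnu
    -- Step C: descend to a nonzero solution over f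
    have hBne : (B : Matrix (Fin m) (Fin m) k) ≠ 0 := hunit_ne B
    obtain ⟨i0, j0, hij0⟩ : ∃ i j, (B : Matrix (Fin m) (Fin m) k) i j ≠ 0 := by
      by_contra h
      push_neg at h
      exact hBne (Matrix.ext fun i j => h i j)
    let bV := Module.Basis.ofVectorSpace f k
    have hrepr0 : bV.repr ((B : Matrix (Fin m) (Fin m) k) i0 j0) ≠ 0 := by
      intro h0
      exact hij0 (by simpa using (LinearEquiv.map_eq_zero_iff bV.repr).mp h0)
    obtain ⟨t, ht⟩ : ∃ t, bV.repr ((B : Matrix (Fin m) (Fin m) k) i0 j0) t ≠ 0 := by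
      by_contra h
      push_neg at h
      exact hrepr0 (Finsupp.ext h)
    let F : k →ₗ[f] k := (Algebra.linearMap f k).comp
      ((Finsupp.lapply t).comp (bV.repr.toLinearMap))
    have hFval : ∀ x : k, F x = ((bV.repr x) t : k) := fun x => rfl
    have hFmem : ∀ x : k, F x ∈ f := fun x => SetLike.coe_mem _
    have hFsmul : ∀ (a : k), a ∈ f → ∀ x : k, F (a * x) = a * F x := by
      intro a ha x
      have h1 : a * x = (⟨a, ha⟩ : f) • x := rfl
      have h2 : (⟨a, ha⟩ : f) • F x = a * F x := rfl
      rw [h1, map_smul, h2]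
    set Cm : Matrix (Fin m) (Fin m) k :=
      Matrix.of (fun i j => F ((B : Matrix (Fin m) (Fin m) k) i j)) with hCmdef
    have hCmapp : ∀ i j, Cm i j = F ((B : Matrix (Fin m) (Fin m) k) i j) := fun i j => rfl
    have hCf : ∀ i j, Cm i j ∈ f := fun i j => hFmem _
    have hCne : Cm i0 j0 ≠ 0 := by
      rw [hCmapp, hFval]
      intro h0
      exact ht (by exact_mod_cast h0)
    have hCeq : ∀ (α : N) (hα : α ∈ S), Cm * (M α : Matrix (Fin m) (Fin m) k)
        = ν α hα • ((M (σ α) : Matrix (Fin m) (Fin m) k) * Cm) := by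
      intro α hα
      ext i j
      rw [Matrix.mul_apply, Matrix.smul_apply, Matrix.mul_apply, Finset.smul_sum]
      calc ∑ l, Cm i l * (M α : Matrix (Fin m) (Fin m) k) l j
          = ∑ l, F ((M α : Matrix (Fin m) (Fin m) k) l j * (B : Matrix (Fin m) (Fin m) k) i l) := by
            refine Finset.sum_congr rfl fun l _ => ?_
            rw [hCmapp, hFsmul _ (hMf α l j), mul_comm]
        _ = F (∑ l, (B : Matrix (Fin m) (Fin m) k) i l * (M α : Matrix (Fin m) (Fin m) k) l j) := by
            rw [map_sum]
            exact Finset.sum_congr rfl fun l _ => by rw [mul_comm]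
        _ = F ((ν α hα • ((M (σ α) : Matrix (Fin m) (Fin m) k) * (B : Matrix (Fin m) (Fin m) k))) i j) := by
            rw [← Matrix.mul_apply, hνeq α hα]
        _ = ∑ l, F ((ν α hα * (M (σ α) : Matrix (Fin m) (Fin m) k) i l) * (B : Matrix (Fin m) (Fin m) k) l j) := by
            rw [Matrix.smul_apply, Matrix.mul_apply, smul_eq_mul, Finset.mul_sum, map_sum]
            exact Finset.sum_congr rfl fun l _ => by rw [mul_assoc]
        _ = ∑ l, ν α hα • ((M (σ α) : Matrix (Fin m) (Fin m) k) i l * Cm l j) := by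
            refine Finset.sum_congr rfl fun l _ => ?_
            rw [hFsmul _ (f.mul_mem (hνf α hα) (hMf (σ α) i l)), hCmapp, smul_eq_mul, mul_assoc]
    -- Step D: D commutes with the whole image of N
    set D : Matrix (Fin m) (Fin m) k :=
      ((B⁻¹ : Matrix.GeneralLinearGroup (Fin m) k) : Matrix (Fin m) (Fin m) k) * Cm with hDdef
    have hMαinv : ∀ (α : N) (hα : α ∈ S), (M α : Matrix (Fin m) (Fin m) k)
        * ((B⁻¹ : Matrix.GeneralLinearGroup (Fin m) k) : Matrix (Fin m) (Fin m) k)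
        = ν α hα • (((B⁻¹ : Matrix.GeneralLinearGroup (Fin m) k) : Matrix (Fin m) (Fin m) k)
          * (M (σ α) : Matrix (Fin m) (Fin m) k)) := by
      intro α hα
      have h5 : ((B⁻¹ : Matrix.GeneralLinearGroup (Fin m) k) : Matrix (Fin m) (Fin m) k)
          * ((B : Matrix (Fin m) (Fin m) k) * (M α : Matrix (Fin m) (Fin m) k))
          * ((B⁻¹ : Matrix.GeneralLinearGroup (Fin m) k) : Matrix (Fin m) (Fin m) k)
          = (M α : Matrix (Fin m) (Fin m) k)
            * ((B⁻¹ : Matrix.GeneralLinearGroup (Fin m) k) : Matrix (Fin m) (Fin m) k) := by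
        rw [← mul_assoc, ← Units.val_mul, inv_mul_cancel, Units.val_one, one_mul]
      rw [hνeq α hα] at h5
      rw [← h5, mul_smul_comm, smul_mul_assoc]
      congr 1
      rw [mul_assoc, mul_assoc, ← Units.val_mul, mul_inv_cancel, Units.val_one, mul_one]
    have hDM : ∀ α ∈ S, Commute D ((M α : Matrix (Fin m) (Fin m) k)) := by
      intro α hα
      show D * (M α : Matrix (Fin m) (Fin m) k) = (M α : Matrix (Fin m) (Fin m) k) * D
      calc D * (M α : Matrix (Fin m) (Fin m) k)
          = ((B⁻¹ : Matrix.GeneralLinearGroup (Fin m) k) : Matrix (Fin m) (Fin m) k)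
            * (Cm * (M α : Matrix (Fin m) (Fin m) k)) := by rw [hDdef, mul_assoc]
        _ = ((B⁻¹ : Matrix.GeneralLinearGroup (Fin m) k) : Matrix (Fin m) (Fin m) k)
            * (ν α hα • ((M (σ α) : Matrix (Fin m) (Fin m) k) * Cm)) := by rw [hCeq α hα]
        _ = (ν α hα • (((B⁻¹ : Matrix.GeneralLinearGroup (Fin m) k) : Matrix (Fin m) (Fin m) k)
            * (M (σ α) : Matrix (Fin m) (Fin m) k))) * Cm := by
              rw [mul_smul_comm, smul_mul_assoc, mul_assoc]
        _ = ((M α : Matrix (Fin m) (Fin m) k)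
            * ((B⁻¹ : Matrix.GeneralLinearGroup (Fin m) k) : Matrix (Fin m) (Fin m) k)) * Cm := by
              rw [← hMαinv α hα]
        _ = (M α : Matrix (Fin m) (Fin m) k) * D := by rw [hDdef, mul_assoc]
    have hDρS : ∀ α ∈ S, Commute D ((ρ (inl α) : Matrix (Fin m) (Fin m) k)) := by
      intro α hα
      rw [hc α]
      exact (hDM α hα).smul_right (c α)
    have hH : ∀ g : N, Commute D ((ρ (inl g) : Matrix (Fin m) (Fin m) k)) := by
      let H : Subgroup N :=
        { carrier := {g : N | Commute D ((ρ (inl g) : Matrix (Fin m) (Fin m) k))}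
          one_mem' := by
            show Commute D ((ρ (inl (1 : N)) : Matrix (Fin m) (Fin m) k))
            rw [map_one, map_one, Units.val_one]
            exact Commute.one_right D
          mul_mem' := by
            intro a b ha hb
            show Commute D ((ρ (inl (a * b)) : Matrix (Fin m) (Fin m) k))
            rw [map_mul, map_mul, Units.val_mul]
            exact Commute.mul_right ha hb
          inv_mem' := by
            intro a ha
            show Commute D ((ρ (inl a⁻¹) : Matrix (Fin m) (Fin m) k))
            rw [map_inv, map_inv]
            exact Commute.units_inv_right ha }
      have hSH : Subgroup.closure S ≤ H := (Subgroup.closure_le H).mpr (fun g hg => hDρS g hg)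
      intro g
      have : g ∈ H := by
        rw [hSgen] at hSH
        exact hSH (Subgroup.mem_top g)
      exact this
    -- Step E: Schur's lemma, D is a scalar
    have hD0 : D ≠ 0 := by
      intro h0
      apply hCne
      have : Cm = (B : Matrix (Fin m) (Fin m) k) * D := by
        rw [hDdef, ← mul_assoc, ← Units.val_mul, mul_inv_cancel, Units.val_one, one_mul]
      rw [this, h0, mul_zero]
      rfl
    obtain ⟨μ, hμ⟩ := Module.End.exists_eigenvalue (Matrix.mulVecLin D)
    obtain ⟨v, hv⟩ := hμ.exists_hasEigenvector
    set U : Submodule k (Fin m → k) :=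
      LinearMap.ker (Matrix.mulVecLin D - μ • LinearMap.id) with hUdef
    have hUmem : ∀ x, x ∈ U ↔ D.mulVec x = μ • x := by
      intro x
      rw [hUdef, LinearMap.mem_ker, LinearMap.sub_apply, LinearMap.smul_apply, LinearMap.id_apply,
        sub_eq_zero, Matrix.mulVecLin_apply]
    have hUinv : ∀ (α : N), ∀ x ∈ U,
        Matrix.mulVec ((ρ (inl α) : Matrix (Fin m) (Fin m) k)) x ∈ U := by
      intro α x hx
      rw [hUmem] at hx ⊢
      rw [Matrix.mulVec_mulVec, (hH α).eq, ← Matrix.mulVec_mulVec, hx,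
        Matrix.mulVec_smul]
    have hDμ : D = μ • 1 := by
      rcases hirr U hUinv with h | h
      · exfalso
        have hvU : v ∈ U := (hUmem v).mpr (by
          have := hv.1
          rwa [Module.End.mem_eigenspace_iff, Matrix.mulVecLin_apply] at this)
        rw [h, Submodule.mem_bot] at hvU
        exact hv.2 hvU
      · have hall : ∀ x, D.mulVec x = μ • x := fun x => (hUmem x).1 (h ▸ Submodule.mem_top)
        ext i j
        have hsingle := congrFun (hall (Pi.single j 1)) i
        simp only [Matrix.mulVec_single, mul_one, Pi.smul_apply, Pi.single_apply,
          smul_eq_mul, MulOpposite.op_one, one_smul, Matrix.col_apply] at hsingle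
        rw [Matrix.smul_apply, Matrix.one_apply, hsingle, smul_eq_mul]
    have hμ0 : μ ≠ 0 := by
      intro h0
      apply hD0
      rw [hDμ, h0, zero_smul]
    -- Step F: conclude
    have hCB : Cm = μ • (B : Matrix (Fin m) (Fin m) k) := by
      have h6 : Cm = (B : Matrix (Fin m) (Fin m) k) * D := by
        rw [hDdef, ← mul_assoc, ← Units.val_mul, mul_inv_cancel, Units.val_one, one_mul]
      rw [h6, hDμ, mul_smul_comm, mul_one]
    refine ⟨⟨μ • (B : Matrix (Fin m) (Fin m) k),
        μ⁻¹ • ((B⁻¹ : Matrix.GeneralLinearGroup (Fin m) k) : Matrix (Fin m) (Fin m) k), ?_, ?_⟩,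
        ?_, ?_⟩
    · rw [smul_mul_smul_comm, ← Units.val_mul, mul_inv_cancel, mul_inv_cancel₀ hμ0,
        Units.val_one, one_smul]
    · rw [smul_mul_smul_comm, ← Units.val_mul, inv_mul_cancel, inv_mul_cancel₀ hμ0,
        Units.val_one, one_smul]
    · intro i j
      show (μ • (B : Matrix (Fin m) (Fin m) k)) i j ∈ f
      rw [← hCB]
      exact hCf i j
    · rw [hP, QuotientGroup.mk'_eq_mk']
      refine ⟨⟨μ⁻¹ • (1 : Matrix (Fin m) (Fin m) k), μ • (1 : Matrix (Fin m) (Fin m) k), ?_, ?_⟩,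
        ?_, ?_⟩
      · rw [smul_mul_smul_comm, inv_mul_cancel₀ hμ0, one_mul, one_smul]
      · rw [smul_mul_smul_comm, mul_inv_cancel₀ hμ0, one_mul, one_smul]
      · exact aux_scalar_mem_center _ _ rfl
      · refine Units.ext ?_
        rw [Units.val_mul]
        show (μ • (B : Matrix (Fin m) (Fin m) k)) * (μ⁻¹ • (1 : Matrix (Fin m) (Fin m) k)) = _
        rw [smul_mul_smul_comm, mul_one, mul_inv_cancel₀ hμ0, one_smul]
  -- final assembly
  intro x
  rw [← inl_left_mul_inr_right x, map_mul, map_mul]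
  obtain ⟨M1, h1f, h1⟩ := hval x.left
  obtain ⟨M2, h2f, h2⟩ := key x.right
  refine ⟨M1 * M2, ?_, ?_⟩
  · intro i j
    rw [Units.val_mul, Matrix.mul_apply]
    exact Subfield.sum_mem f (fun l _ => f.mul_mem (h1f i l) (h2f l j))
  · rw [map_mul, h1, h2]
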